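/- Let a, b ≥ 0 with a + b ≥ 1, and let w be any binary word of length a + b + 1 containing exactly a + 1 ones. Then 2·(value of 11 0^b 1^a) < 3·(value of 1 w), where both words have length a + b + 2. -/

import Mathlib

/-- Base-2 value of a binary word (most significant bit first). -/
def val (w : List Bool) : ℕ :=
  w.foldl (fun n b => 2 * n + b.toNat) 0

private lemma foldl_rep_false (n : ℕ) : ∀ m : ℕ,
    (List.replicate n false).foldl (fun n b => 2 * n + b.toNat) m = m * 2 ^ n := by
  induction n with
  | zero => simp
  | succ k ih =>
    intro m
    simp only [List.replicate_succ, List.foldl_cons, ih]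
    simp [Bool.toNat]
    ring

private lemma foldl_rep_true (n : ℕ) : ∀ m : ℕ,
    (List.replicate n true).foldl (fun n b => 2 * n + b.toNat) m + 1 = (m + 1) * 2 ^ n := by
  induction n with
  | zero => simp
  | succ k ih =>
    intro m
    simp only [List.replicate_succ, List.foldl_cons]
    have := ih (2 * m + (true : Bool).toNat)
    simp [Bool.toNat] at this ⊢
    rw [this]
    ring

private lemma foldl_lower (w : List Bool) : ∀ n : ℕ,
    n * 2 ^ w.length + 2 ^ (w.count true) ≤
      w.foldl (fun n b => 2 * n + b.toNat) n + 1 := by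
  induction w with
  | nil => intro n; simp
  | cons hd t ih =>
    intro n
    cases hd with
    | false =>
      have h := ih (2 * n + (false : Bool).toNat)
      simp only [List.foldl_cons, List.length_cons] at h ⊢
      simp only [Bool.toNat, cond_true, cond_false, Nat.add_zero] at h ⊢
      rw [show (false :: t).count true = t.count true by simp [List.count_cons]]
      have h2 : (2 * n) * 2 ^ t.length = n * 2 ^ (t.length + 1) := by ring
      omega
    | true =>
      have h := ih (2 * n + (true : Bool).toNat)
      simp only [List.foldl_cons, List.length_cons] at h ⊢
      simp only [Bool.toNat, cond_true, cond_false, Nat.add_zero] at h ⊢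
      rw [show (true :: t).count true = t.count true + 1 by simp [List.count_cons]]
      have hcl : t.count true ≤ t.length := List.count_le_length
      have hp : 2 ^ t.count true ≤ 2 ^ t.length := Nat.pow_le_pow_right (by norm_num) hcl
      have h2 : (2 * n + 1) * 2 ^ t.length = n * 2 ^ (t.length + 1) + 2 ^ t.length := by ring
      have h3 : 2 ^ (t.count true + 1) = 2 * 2 ^ t.count true := by ring
      omega

theorem stmt7 (a b : ℕ) (hab : 1 ≤ a + b)
    (w : List Bool) (hl : w.length = a + b + 1) (hc : w.count true = a + 1) :
    2 * val ([true, true] ++ List.replicate b false ++ List.replicate a true) <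
      3 * val ([true] ++ w) := by
  have h1 : val ([true, true] ++ List.replicate b false ++ List.replicate a true) + 1 =
      3 * 2 ^ (a + b) + 2 ^ a := by
    unfold val
    simp only [List.append_assoc, List.foldl_append, List.foldl_cons, List.foldl_nil]
    rw [foldl_rep_false b (2 * (2 * 0 + (true:Bool).toNat) + (true:Bool).toNat)]
    rw [foldl_rep_true a]
    simp [Bool.toNat, pow_add]
    ring
  have h2 : val ([true] ++ w) = w.foldl (fun n b => 2 * n + b.toNat) 1 := by
    unfold val; simp
  have h3 := foldl_lower w 1
  rw [hl, hc] at h3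
  rw [← h2] at h3
  have hx : (1:ℕ) ≤ 2 ^ a := Nat.one_le_two_pow
  have e1 : 2 ^ (a + b + 1) = 2 * 2 ^ (a + b) := by ring
  have e2 : 2 ^ (a + 1) = 2 * 2 ^ a := by ring
  omega
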